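/- arXiv:2103.09336 — 2 statements merged into one kernel-verified Lean document; each statement's English description precedes it below -/
import Mathlib

section
/- Let q be a prime power, let H(2n−1,q²) be a non-degenerate Hermitian variety of PG(2n−1,q²) with associated Hermitian polarity ⊥, let Σ be a Baer subgeometry of PG(2n−1,q²), and let τ be the Baer involution of PG(2n−1,q²) fixing Σ pointwise. Then H(2n−1,q²) induces a polarity on Σ (i.e., P^⊥ ∩ Σ is a hyperplane of Σ for every point P of Σ) if and only if τ fixes H(2n−1,q²) setwise. -/
open Module

/-- A (possibly Hermitian) sesquilinear form with respect to the field
automorphism `σ`: additive in both arguments, linear in the first one,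
`σ`-semilinear in the second one, and conjugate-symmetric. -/
structure SesquiForm (E : Type*) [Field E] (σ : E → E) (V : Type*) [AddCommGroup V]
    [Module E V] where
  toFun : V → V → E
  add_left : ∀ x y z, toFun (x + y) z = toFun x z + toFun y z
  smul_left : ∀ (c : E) (x y : V), toFun (c • x) y = c * toFun x y
  add_right : ∀ x y z, toFun x (y + z) = toFun x y + toFun x z
  smul_right : ∀ (c : E) (x y : V), toFun x (c • y) = σ c * toFun x y
  conj_symm : ∀ x y, toFun y x = σ (toFun x y)

/-- Non-degeneracy of a sesquilinear form. -/
def SesquiForm.Nondeg {E V : Type*} [Field E] {σ : E → E} [AddCommGroup V] [Module E V]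
    (B : SesquiForm E σ V) : Prop :=
  ∀ v : V, (∀ w : V, B.toFun v w = 0) → v = 0

/-- `W` is an `F`-form of the `E`-vector space `V` of `E`-dimension `m`
(here `E` is a quadratic extension of `F`): the `F`-subspace `W` has `F`-dimension `m`
and spans `V` over `E`.  Such a `W` determines a Baer subgeometry of `PG(V)`. -/
def IsBaerForm (E : Type*) {V : Type*} {F : Type*} [Field F] [Field E] [Algebra F E]
    [AddCommGroup V] [Module E V] [Module F V] [IsScalarTower F E V]
    (m : ℕ) (W : Submodule F V) : Prop :=
  Submodule.span E (W : Set V) = ⊤ ∧ finrank F ↥W = m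

section Baer

variable (F : Type*) {E V : Type*} [Field F] [Field E] [Algebra F E]
  [AddCommGroup V] [Module E V] [Module F V] [IsScalarTower F E V]

/-- The set of points of the Baer subgeometry of `PG(V)` determined by the `F`-form `W`:
the `1`-dimensional `E`-subspaces spanned by nonzero vectors of `W`. -/
def baerPts (W : Submodule F V) : Set (Submodule E V) :=
  {p | finrank E ↥p = 1 ∧ ∃ v ∈ W, v ≠ 0 ∧ v ∈ p}

/-- `S` is (the point set of) a Baer subgeometry of `PG(V)` embedded in the Hermitian
variety determined by `B` (all of its points lie on the variety). -/
def EmbBaerSubgeom {σ : E → E} (B : SesquiForm E σ V) (m : ℕ)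
    (S : Set (Submodule E V)) : Prop :=
  ∃ W : Submodule F V, IsBaerForm E m W ∧ (∀ v ∈ W, B.toFun v v = 0) ∧ S = baerPts F W

end Baer


set_option linter.unusedSectionVars false

section AuxLemmas
variable {F E : Type} [Field F] [Field E] [Fintype F] [Fintype E] [Algebra F E]


lemma aux_exists_nonfixed (σ : E ≃ₐ[F] E) (hσ : σ ≠ AlgEquiv.refl) : ∃ θ : E, σ θ ≠ θ := by
  by_contra h
  push_neg at h
  exact hσ (AlgEquiv.ext fun x => by simpa using h x)

lemma aux_fixed_mem_range (hFE : finrank F E = 2) (σ : E ≃ₐ[F] E) (hσ : σ ≠ AlgEquiv.refl)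
    {x : E} (hx : σ x = x) : ∃ a : F, algebraMap F E a = x := by
  by_contra h
  push_neg at h
  have hindep : LinearIndependent F ![(1 : E), x] := by
    rw [LinearIndependent.pair_iff]
    intro s t hst
    rcases eq_or_ne t 0 with ht | ht
    · subst ht
      simp only [smul_zero, zero_smul, add_zero, smul_eq_mul, mul_one] at hst
      have : algebraMap F E s = 0 := by
        rw [Algebra.algebraMap_eq_smul_one]; simpa using hst
      exact ⟨by simpa using (algebraMap F E).injective (by simpa using this), rfl⟩
    · exfalso
      apply h (-(t⁻¹ * s))
      have : x = (-(t⁻¹ * s)) • (1 : E) := by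
        have h1 : t • x = -(s • (1:E)) := by linear_combination hst
        have h2 : t⁻¹ • (t • x) = t⁻¹ • (-(s • (1:E))) := by rw [h1]
        rw [smul_smul, inv_mul_cancel₀ ht, one_smul, smul_neg, smul_smul] at h2
        rw [h2, neg_smul]
      rw [this, Algebra.algebraMap_eq_smul_one]
  have hfin : FiniteDimensional F E := FiniteDimensional.of_finrank_pos (by omega)
  have hspan : Submodule.span F (Set.range ![(1:E), x]) = ⊤ :=
    hindep.span_eq_top_of_card_eq_finrank (by simp [hFE])
  have : σ.toLinearMap = (AlgEquiv.refl : E ≃ₐ[F] E).toLinearMap := by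
    apply LinearMap.ext_on hspan
    intro y hy
    rcases Set.mem_range.1 hy with ⟨i, rfl⟩
    fin_cases i <;> simp [hx]
  exact hσ (AlgEquiv.ext fun y => by
    have := LinearMap.congr_fun this y
    simpa using this)


lemma aux_norm_surj (hFE : finrank F E = 2) (σ : E ≃ₐ[F] E) (hσ : σ ≠ AlgEquiv.refl)
    (hinv : ∀ x, σ (σ x) = x) {ν : E} (hν : ν ≠ 0) (hfixν : σ ν = ν) :
    ∃ c : E, c * σ c = ν := by
  classical
  have hfixmem : ∀ {x : E}, σ x = x → ∃ a : F, algebraMap F E a = x :=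
    fun hx => aux_fixed_mem_range hFE σ hσ hx
  set q := Fintype.card F with hq
  have hq2 : 2 ≤ q := Fintype.one_lt_card
  have hcardE : Fintype.card E = q ^ 2 := by
    rw [card_eq_pow_finrank (K := F) (V := E), hFE]
  have hcardU : Nat.card Eˣ = q ^ 2 - 1 := by
    rw [Nat.card_units, Nat.card_eq_fintype_card, hcardE]
  -- σ as a monoid hom on units
  let sm : E →* E := { toFun := fun x => σ x, map_one' := map_one σ, map_mul' := map_mul σ }
  let um : Eˣ →* Eˣ := Units.map sm
  have humcoe : ∀ c : Eˣ, (um c : E) = σ c := fun c => rfl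
  let ρ : Eˣ →* Eˣ := MonoidHom.id Eˣ * (invMonoidHom.comp um)
  have hρcoe : ∀ c : Eˣ, (ρ c : E) = c * (σ c)⁻¹ := fun c => by
    simp [ρ, um, sm, invMonoidHom, Units.val_inv_eq_inv_val]
  let Nh : Eˣ →* Eˣ := MonoidHom.id Eˣ * um
  have hNcoe : ∀ c : Eˣ, (Nh c : E) = c * σ c := fun c => by simp [Nh, um, sm]
  have hkermem : ∀ c : Eˣ, c ∈ ρ.ker ↔ σ (c : E) = c := by
    intro c
    have hc0 : ((c : E)) ≠ 0 := c.ne_zero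
    have hσc0 : σ (c : E) ≠ 0 := fun h => hc0 (σ.injective (h.trans (map_zero σ).symm))
    rw [MonoidHom.mem_ker, Units.ext_iff, Units.val_one, hρcoe,
      mul_inv_eq_iff_eq_mul₀ hσc0, one_mul, eq_comm]
  -- card of ker ρ
  have hkerρcard : Nat.card ρ.ker = q - 1 := by
    have : Nat.card Fˣ = q - 1 := by rw [Nat.card_units, Nat.card_eq_fintype_card]
    rw [← this]
    refine Nat.card_congr (Equiv.ofBijective (f := fun a : Fˣ =>
      (⟨Units.map (algebraMap F E).toMonoidHom a, by
        rw [hkermem]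
        exact σ.commutes _⟩ : ρ.ker)) ⟨?_, ?_⟩).symm
    · intro a b hab
      have h1 : (algebraMap F E) (a : F) = (algebraMap F E) (b : F) := by
        have := congrArg (fun x => ((x : ρ.ker) : Eˣ) : ρ.ker → E) hab
        simpa using this
      exact Units.ext ((algebraMap F E).injective h1)
    · rintro ⟨c, hc⟩
      rw [hkermem] at hc
      obtain ⟨a, ha⟩ := hfixmem hc
      have ha0 : a ≠ 0 := by
        rintro rfl
        rw [map_zero] at ha
        exact c.ne_zero ha.symm
      refine ⟨Units.mk0 a ha0, ?_⟩
      apply Subtype.ext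
      apply Units.ext
      simpa using ha
  -- Hilbert 90 : ker Nh ≤ range ρ
  have h90 : Nh.ker ≤ ρ.range := by
    intro u hu
    rw [MonoidHom.mem_ker] at hu
    have hu1 : (u : E) * σ u = 1 := by
      have : (Nh u : E) = 1 := by rw [hu]; rfl
      rwa [hNcoe] at this
    have hsex : ∃ c : E, c + (u : E) * σ c ≠ 0 := by
      by_contra hall
      push_neg at hall
      have h1 : (1 : E) + (u : E) = 0 := by simpa using hall 1
      have hu' : (u : E) = -1 := by linear_combination h1
      obtain ⟨θ, hθ⟩ := aux_exists_nonfixed σ hσ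
      apply hθ
      have := hall θ
      rw [hu'] at this
      linear_combination -this
    obtain ⟨c, hs⟩ := hsex
    set s := c + (u : E) * σ c with hsdef
    have hss : (u : E) * σ s = s := by
      rw [hsdef, map_add, map_mul, hinv]
      linear_combination c * hu1
    have hσs : σ s ≠ 0 := by
      intro h0
      apply hs
      have := congrArg σ h0
      rw [hinv] at this
      simpa [hsdef] using this
    refine ⟨Units.mk0 s hs, ?_⟩
    apply Units.ext
    rw [hρcoe]
    simp only [Units.val_mk0]
    rw [mul_inv_eq_iff_eq_mul₀ hσs]
    exact hss.symm
  -- counting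
  have hcard_iso : ∀ (f : Eˣ →* Eˣ), Nat.card f.range * Nat.card f.ker = q ^ 2 - 1 := by
    intro f
    rw [← hcardU, Subgroup.card_eq_card_quotient_mul_card_subgroup f.ker]
    congr 1
    exact (Nat.card_congr (QuotientGroup.quotientKerEquivRange f).toEquiv).symm
  have hρrange : Nat.card ρ.range = q + 1 := by
    have h1 := hcard_iso ρ
    rw [hkerρcard] at h1
    have hfac : q ^ 2 - 1 = (q + 1) * (q - 1) := by
      zify [show (1:ℕ) ≤ q from by omega, show (1:ℕ) ≤ q ^ 2 from by nlinarith]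
      ring
    rw [hfac] at h1
    have : q - 1 ≠ 0 := by omega
    exact Nat.eq_of_mul_eq_mul_right (by omega) h1
  have hNker_le : Nat.card Nh.ker ≤ q + 1 := by
    rw [← hρrange]
    exact Subgroup.card_le_of_le h90
  have hNrange_ge : q - 1 ≤ Nat.card Nh.range := by
    have h1 := hcard_iso Nh
    have hfac : q ^ 2 - 1 = (q - 1) * (q + 1) := by
      zify [show (1:ℕ) ≤ q from by omega, show (1:ℕ) ≤ q ^ 2 from by nlinarith]
      ring
    by_contra hlt
    push_neg at hlt
    have h2 : Nat.card Nh.range * Nat.card Nh.ker < (q - 1) * (q + 1) := by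
      calc Nat.card Nh.range * Nat.card Nh.ker ≤ Nat.card Nh.range * (q + 1) :=
            Nat.mul_le_mul_left _ hNker_le
        _ < (q - 1) * (q + 1) := Nat.mul_lt_mul_of_pos_right hlt (by omega)
    rw [hfac] at h1
    exact absurd h1 (Nat.ne_of_lt h2)
  have hNrange_le : Nh.range ≤ ρ.ker := by
    rintro x ⟨c, rfl⟩
    rw [hkermem, hNcoe, map_mul, hinv, mul_comm]
  have hEq : Nh.range = ρ.ker := by
    have hfin : (ρ.ker : Set Eˣ).Finite := Set.toFinite _
    apply SetLike.ext'
    apply Set.eq_of_subset_of_ncard_le hNrange_le _ hfin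
    rw [← Nat.card_coe_set_eq, ← Nat.card_coe_set_eq]
    have h1 : Nat.card ρ.ker = q - 1 := hkerρcard
    have h2 : Nat.card (ρ.ker : Set Eˣ) = Nat.card ρ.ker := rfl
    have h3 : Nat.card (Nh.range : Set Eˣ) = Nat.card Nh.range := rfl
    rw [h2, h3, h1]
    exact hNrange_ge
  -- conclude
  have hν1 : Units.mk0 ν hν ∈ ρ.ker := by rw [hkermem]; exact hfixν
  rw [← hEq] at hν1
  obtain ⟨c, hc⟩ := hν1
  refine ⟨(c : E), ?_⟩
  have h5 : (Nh c : E) = ν := by rw [hc]; rfl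
  rw [hNcoe] at h5
  exact h5


lemma aux_sign (hFE : finrank F E = 2) (σ : E ≃ₐ[F] E) (hσ : σ ≠ AlgEquiv.refl)
    (hinv : ∀ x, σ (σ x) = x) {a d z : E}
    (ha : σ a = a) (hd : σ d = d)
    (hyp : ∀ c : E, a + c * σ c * d + σ c * z + c * σ z = 0 ↔
                    a + c * σ c * d + c * z + σ c * σ z = 0) :
    σ z = z ∨ σ z = -z := by
  obtain ⟨θ, hθ⟩ := aux_exists_nonfixed σ hσ
  have hstar : ∀ c : E, a + c * σ c * d + σ c * z + c * σ z = 0 → σ c = c ∨ σ z = z := by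
    intro c hf
    have hg := (hyp c).mp hf
    have hdiff : (σ c - c) * (z - σ z) = 0 := by linear_combination hf - hg
    rcases mul_eq_zero.mp hdiff with h | h
    · exact Or.inl (by linear_combination h)
    · exact Or.inr (by linear_combination -h)
  by_cases hz0 : z = 0
  · left; rw [hz0, map_zero]
  have hσz0 : σ z ≠ 0 := fun h => hz0 (σ.injective (h.trans (map_zero σ).symm))
  set x₀ : E := θ - σ θ with hx₀def
  have hx₀fix : σ x₀ = -x₀ := by rw [hx₀def, map_sub, hinv]; ring
  have hx₀0 : x₀ ≠ 0 := sub_ne_zero.mpr (fun h => hθ h.symm)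
  by_cases hd0 : d = 0
  · by_cases ha0 : a = 0
    · -- Fact 3
      set c₀ : E := σ x₀ / σ z with hc₀def
      have hσc₀ : σ c₀ = x₀ / z := by rw [hc₀def, map_div₀, hinv, hinv]
      have hf : a + c₀ * σ c₀ * d + σ c₀ * z + c₀ * σ z = 0 := by
        rw [ha0, hd0, hσc₀, hc₀def, mul_zero, div_mul_cancel₀ _ hz0,
          div_mul_cancel₀ _ hσz0, hx₀fix]
        ring
      rcases hstar c₀ hf with hc | hzz
      · right
        rw [hσc₀, hc₀def, hx₀fix] at hc
        have h2 : x₀ * σ z = x₀ * (-z) := by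
          field_simp at hc
          linear_combination x₀ * hc
        exact mul_left_cancel₀ hx₀0 h2
      · left; exact hzz
    · -- Fact 2 : d = 0, a ≠ 0
      have htr : ∃ x : E, x + σ x = -a := by
        by_cases h2 : (2 : E) = 0
        · have ht₀ : θ + σ θ ≠ 0 := by
            intro h
            apply hθ
            have hσθ : σ θ = -θ := by linear_combination h
            rw [hσθ]
            linear_combination -θ * h2
          refine ⟨(-a / (θ + σ θ)) * θ, ?_⟩
          have hfixt : σ (-a / (θ + σ θ)) = -a / (θ + σ θ) := by
            rw [map_div₀, map_neg, ha, map_add, hinv, add_comm]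
          rw [map_mul, hfixt]
          field_simp
          ring
        · refine ⟨-a / 2, ?_⟩
          have : σ (-a / 2) = -a / 2 := by
            rw [map_div₀, map_neg, ha, map_ofNat]
          rw [this]
          field_simp
          ring
      obtain ⟨x₁, hx₁⟩ := htr
      have hzero : ∀ x : E, x + σ x = -a →
          a + (σ x / σ z) * σ (σ x / σ z) * d + σ (σ x / σ z) * z + (σ x / σ z) * σ z = 0 := by
        intro x hx
        have hσc : σ (σ x / σ z) = x / z := by rw [map_div₀, hinv, hinv]
        rw [hσc, hd0, mul_zero, div_mul_cancel₀ _ hz0, div_mul_cancel₀ _ hσz0]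
        linear_combination hx
      have h1 := hzero x₁ hx₁
      have h2 := hzero (x₁ + x₀) (by rw [map_add, hx₀fix]; linear_combination hx₁)
      rcases hstar _ h1 with hc1 | hzz
      · rcases hstar _ h2 with hc2 | hzz'
        · -- both fixed : conclude σ z = -z
          right
          rw [map_div₀, hinv, hinv] at hc1 hc2
          -- hc1 : x₁ / z = σ x₁ / σ z ; hc2 : (x₁+x₀)/z = σ(x₁+x₀)/σ z
          rw [map_add, hx₀fix] at hc2
          have e1 : x₁ * σ z = σ x₁ * z := by
            field_simp at hc1
            linear_combination hc1
          have e2 : (x₁ + x₀) * σ z = (σ x₁ - x₀) * z := by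
            field_simp at hc2
            linear_combination hc2
          have e3 : x₀ * σ z = x₀ * (-z) := by linear_combination e2 - e1
          exact mul_left_cancel₀ hx₀0 e3
        · left; exact hzz'
      · left; exact hzz
  · -- Fact 1 : d ≠ 0
    left
    by_contra hne
    have hstar' : ∀ c : E, a + c * σ c * d + σ c * z + c * σ z = 0 → σ c = c := by
      intro c hf
      rcases hstar c hf with h | h
      · exact h
      · exact absurd h hne
    by_cases hν0 : z * σ z - a * d = 0
    · -- ν = 0 case
      have hf : a + (-(z/d)) * σ (-(z/d)) * d + σ (-(z/d)) * z + (-(z/d)) * σ z = 0 := by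
        rw [map_neg, map_div₀, hd]
        field_simp
        linear_combination (-1) * hν0
      have hc := hstar' _ hf
      rw [map_neg, map_div₀, hd] at hc
      have hc2 : σ z / d = z / d := neg_injective hc
      rw [div_eq_div_iff hd0 hd0] at hc2
      exact hne (mul_right_cancel₀ hd0 hc2)
    · -- ν ≠ 0 case
      have hd20 : d * d ≠ 0 := mul_ne_zero hd0 hd0
      set ν : E := (z * σ z - a * d) / (d * d) with hνdef
      have hν : ν ≠ 0 := by
        rw [hνdef, div_ne_zero_iff]
        exact ⟨hν0, hd20⟩
      have hνfix : σ ν = ν := by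
        rw [hνdef]
        simp only [map_div₀, map_sub, map_mul]
        rw [ha, hd, hinv, mul_comm (σ z) z]
      obtain ⟨e, he⟩ := aux_norm_surj hFE σ hσ hinv hν hνfix
      have he0 : e ≠ 0 := by
        intro h
        rw [h, zero_mul] at he
        exact hν he.symm
      have hee : e * σ e * (d * d) = z * σ z - a * d := by
        rw [he, hνdef, div_mul_cancel₀ _ hd20]
      have hzero : ∀ s : E, s * σ s = 1 →
          a + (e*s - z/d) * σ (e*s - z/d) * d + σ (e*s - z/d) * z + (e*s - z/d) * σ z = 0 := by
        intro s hs1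
        have hσc : σ (e*s - z/d) = σ e * σ s - σ z / d := by
          rw [map_sub, map_mul, map_div₀, hd]
        rw [hσc]
        field_simp
        linear_combination hee + (d^2 * e * σ e) * hs1
      have hfix : ∀ s : E, s * σ s = 1 → σ e * σ s - σ e = e * s - e := by
        intro s hs1
        have h1 := hstar' _ (hzero 1 (by simp))
        have h2 := hstar' _ (hzero s hs1)
        have hσc1 : σ (e*1 - z/d) = σ e * 1 - σ z / d := by
          rw [map_sub, map_mul, map_div₀, hd, map_one]
        have hσc2 : σ (e*s - z/d) = σ e * σ s - σ z / d := by
          rw [map_sub, map_mul, map_div₀, hd]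
        rw [hσc1] at h1
        rw [hσc2] at h2
        linear_combination h2 - h1
      -- apply to t = θ and t = 1+θ
      have hθ0 : θ ≠ 0 := by
        intro h
        exact hθ (by rw [h, map_zero])
      have hσθ0 : σ θ ≠ 0 := fun h => hθ0 (σ.injective (h.trans (map_zero σ).symm))
      have h1θ : (1 : E) + θ ≠ 0 := by
        intro h
        apply hθ
        have h' : θ = -1 := by linear_combination h
        rw [h']
        simp
      have hσ1θ0 : (1 : E) + σ θ ≠ 0 := by
        intro h
        apply h1θ
        have := congrArg σ h
        rw [map_add, map_one, hinv, map_zero] at this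
        exact this
      have hkey : ∀ t : E, t ≠ 0 → σ t ≠ 0 →
          σ e * t * t - σ e * (t * σ t) = e * σ t * σ t - e * (t * σ t) := by
        intro t ht hσt
        have hs1 : (σ t / t) * σ (σ t / t) = 1 := by
          rw [map_div₀, hinv]
          field_simp
        have r := hfix _ hs1
        rw [map_div₀, hinv] at r
        have r' : (σ e * (t / σ t) - σ e) * (t * σ t) = (e * (σ t / t) - e) * (t * σ t) := by
          rw [r]
        calc σ e * t * t - σ e * (t * σ t)
            = (σ e * (t / σ t) - σ e) * (t * σ t) := by field_simp
          _ = (e * (σ t / t) - e) * (t * σ t) := r'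
          _ = e * σ t * σ t - e * (t * σ t) := by field_simp
      have rp1 := hkey θ hθ0 hσθ0
      have rp2 := hkey (1+θ) h1θ (by rw [map_add, map_one]; exact hσ1θ0)
      rw [map_add, map_one] at rp2
      have hθσ : θ - σ θ ≠ 0 := fun h => hθ (by linear_combination -h)
      have hfac1 : (θ - σ θ) * (σ e * θ + e * σ θ) = 0 := by linear_combination rp1
      have hfac2 : (θ - σ θ) * (σ e * (1+θ) + e * (1+σ θ)) = 0 := by linear_combination rp2
      have R2 : σ e * θ + e * σ θ = 0 := by
        rcases mul_eq_zero.mp hfac1 with h | h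
        · exact absurd h hθσ
        · exact h
      have R3 : σ e * (1+θ) + e * (1+σ θ) = 0 := by
        rcases mul_eq_zero.mp hfac2 with h | h
        · exact absurd h hθσ
        · exact h
      have hσe : σ e = -e := by linear_combination R3 - R2
      have hfin : e * σ θ = e * θ := by linear_combination R2 - θ * hσe
      exact hθ (mul_left_cancel₀ he0 hfin)


end AuxLemmas

/-- Let `q` be a prime power, `E = GF(q²)` a quadratic extension of
`F = GF(q)`, and `σ` the nontrivial automorphism of `E/F` (an involution). Let
`H(2n-1,q²)` be the Hermitian variety of `PG(2n-1,q²)` given by a nondegenerate Hermitian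
form `B` on `E^(2n)` relative to `σ`, with associated Hermitian polarity `⊥`, let `Σ` be a
Baer subgeometry of `PG(2n-1,q²)` and let `τ` be the Baer involution (a `σ`-semilinear
involution of `E^(2n)` whose fixed vectors form an `F`-form) fixing `Σ` pointwise. Then
`H(2n-1,q²)` induces a polarity on `Σ` (i.e. for every point `P` of `Σ`, the set of points
of `Σ` in `P^⊥` is a hyperplane of `Σ`, that is, the trace on `Σ` of a `τ`-invariant
hyperplane of `PG(2n-1,q²)`) if and only if `τ` fixes `H(2n-1,q²)` setwise. -/
theorem baer_polarity_iff_involution_fixes_hermitian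
    (F E : Type) [Field F] [Field E] [Fintype F] [Fintype E] [Algebra F E]
    (hFE : finrank F E = 2)
    (σ : E ≃ₐ[F] E) (hσ : σ ≠ AlgEquiv.refl) (hinv : ∀ x, σ (σ x) = x)
    (n : ℕ) (hn : 1 ≤ n)
    (B : SesquiForm E (⇑σ) (Fin (2*n) → E)) (hB : B.Nondeg)
    (τ : (Fin (2*n) → E) → (Fin (2*n) → E))
    (hτadd : ∀ x y, τ (x + y) = τ x + τ y)
    (hτsemi : ∀ (c : E) (x : Fin (2*n) → E), τ (c • x) = σ c • τ x)
    (hτinvol : ∀ x, τ (τ x) = x)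
    (hτbaer : ∃ b : Basis (Fin (2*n)) E (Fin (2*n) → E), ∀ i, τ (b i) = b i) :
    (∀ v : Fin (2*n) → E, v ≠ 0 → τ v = v →
        ∃ U : Submodule E (Fin (2*n) → E), finrank E ↥U = 2*n - 1 ∧
          (∀ x, x ∈ U ↔ τ x ∈ U) ∧
          ∀ p : Submodule E (Fin (2*n) → E),
            finrank E ↥p = 1 → (∃ u ∈ p, u ≠ 0 ∧ τ u = u) →
            (p ≤ U ↔ ∀ u ∈ p, B.toFun v u = 0)) ↔
      (∀ v, B.toFun v v = 0 ↔ B.toFun (τ v) (τ v) = 0) := by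
  classical
  obtain ⟨b, hb⟩ := hτbaer
  have hσz : ∀ x : E, σ x = 0 ↔ x = 0 :=
    fun x => ⟨fun h => σ.injective (h.trans (map_zero σ).symm), fun h => by rw [h, map_zero]⟩
  -- basic B lemmas
  have hB0r : ∀ x, B.toFun x 0 = 0 := by
    intro x
    have h := B.add_right x 0 0
    rw [add_zero] at h
    linear_combination -h
  have hB0l : ∀ y, B.toFun 0 y = 0 := by
    intro y
    have h := B.add_left 0 0 y
    rw [add_zero] at h
    linear_combination -h
  have hBsumr : ∀ (x : Fin (2*n) → E) (f : Fin (2*n) → (Fin (2*n) → E)),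
      B.toFun x (∑ i, f i) = ∑ i, B.toFun x (f i) := fun x f =>
    map_sum (AddMonoidHom.mk' (fun y => B.toFun x y) (fun a c => B.add_right x a c)) f
      Finset.univ
  have hBsuml : ∀ (y : Fin (2*n) → E) (f : Fin (2*n) → (Fin (2*n) → E)),
      B.toFun (∑ i, f i) y = ∑ i, B.toFun (f i) y := fun y f =>
    map_sum (AddMonoidHom.mk' (fun x => B.toFun x y) (fun a c => B.add_left a c y)) f
      Finset.univ
  have hτsum : ∀ (f : Fin (2*n) → (Fin (2*n) → E)),
      τ (∑ i, f i) = ∑ i, τ (f i) := fun f =>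
    map_sum (AddMonoidHom.mk' τ hτadd) f Finset.univ
  have hτsub : ∀ x y, τ (x - y) = τ x - τ y := by
    intro x y
    have h1 : τ (-y) = -τ y := by
      have h := hτsemi (-1) y
      rw [neg_one_smul] at h
      rw [h, map_neg, map_one, neg_one_smul]
    rw [sub_eq_add_neg, hτadd, h1, sub_eq_add_neg]
  have hτrepr : ∀ x, τ x = ∑ i, σ (b.repr x i) • b i := by
    intro x
    conv_lhs => rw [← b.sum_repr x]
    rw [hτsum]
    exact Finset.sum_congr rfl fun i _ => by rw [hτsemi, hb]
  have hBright : ∀ v x, B.toFun v x = ∑ i, σ (b.repr x i) * B.toFun v (b i) := by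
    intro v x
    conv_lhs => rw [← b.sum_repr x]
    rw [hBsumr]
    exact Finset.sum_congr rfl fun i _ => B.smul_right _ _ _
  have hBrightτ : ∀ v x, B.toFun v (τ x) = ∑ i, (b.repr x i) * B.toFun v (b i) := by
    intro v x
    rw [hτrepr x, hBsumr]
    exact Finset.sum_congr rfl fun i _ => by rw [B.smul_right, hinv]
  have hBleft : ∀ x y, B.toFun x y = ∑ i, (b.repr x i) * B.toFun (b i) y := by
    intro x y
    conv_lhs => rw [← b.sum_repr x]
    rw [hBsuml]
    exact Finset.sum_congr rfl fun i _ => B.smul_left _ _ _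
  have hBleftτ : ∀ x y, B.toFun (τ x) y = ∑ i, σ (b.repr x i) * B.toFun (b i) y := by
    intro x y
    rw [hτrepr x, hBsuml]
    exact Finset.sum_congr rfl fun i _ => B.smul_left _ _ _
  have hrow0 : ∀ v : Fin (2*n) → E, v ≠ 0 → ∃ i, B.toFun v (b i) ≠ 0 := by
    intro v hv
    by_contra hall
    push_neg at hall
    apply hv
    apply hB v
    intro w
    rw [hBright v w]
    simp [hall]
  constructor
  · -- LHS → RHS
    intro hL
    have hrowP : ∀ v : Fin (2*n) → E, v ≠ 0 → τ v = v →
        ∃ lam : E, lam ≠ 0 ∧ ∀ w, τ w = w → σ (B.toFun v w) = lam * B.toFun v w := by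
      intro v hv0 hvfix
      obtain ⟨U, hdimU, hUinv, hUpts⟩ := hL v hv0 hvfix
      have hkey : ∀ w, τ w = w → w ≠ 0 → (w ∈ U ↔ B.toFun v w = 0) := by
        intro w hw hw0
        have h1 := hUpts (Submodule.span E {w}) (finrank_span_singleton hw0)
          ⟨w, Submodule.mem_span_singleton_self w, hw0, hw⟩
        rw [Submodule.span_singleton_le_iff_mem] at h1
        rw [h1]
        constructor
        · intro hall
          exact hall w (Submodule.mem_span_singleton_self w)
        · intro h0 u hu
          rcases Submodule.mem_span_singleton.mp hu with ⟨c, rfl⟩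
          rw [B.smul_right, h0, mul_zero]
      have hw₀ex : ∃ w₀, τ w₀ = w₀ ∧ w₀ ∉ U := by
        by_contra hcon
        push_neg at hcon
        have hUtop : U = ⊤ := by
          rw [eq_top_iff, ← b.span_eq, Submodule.span_le]
          rintro x ⟨i, rfl⟩
          exact hcon (b i) (hb i)
        rw [hUtop, finrank_top, Module.finrank_fin_fun] at hdimU
        omega
      obtain ⟨w₀, hw₀fix, hw₀U⟩ := hw₀ex
      have hw₀0 : w₀ ≠ 0 := fun h => hw₀U (h ▸ U.zero_mem)
      have hz₀ : B.toFun v w₀ ≠ 0 := fun h => hw₀U ((hkey w₀ hw₀fix hw₀0).2 h)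
      have hsup : U ⊔ Submodule.span E {w₀} = ⊤ := by
        apply Submodule.eq_top_of_finrank_eq
        have hlt : U < U ⊔ Submodule.span E {w₀} := by
          refine lt_of_le_of_ne le_sup_left fun h => hw₀U ?_
          have hmem : w₀ ∈ U ⊔ Submodule.span E {w₀} :=
            Submodule.mem_sup_right (Submodule.mem_span_singleton_self w₀)
          rwa [← h] at hmem
        have h1 : finrank E ↥U < finrank E ↥(U ⊔ Submodule.span E {w₀}) :=
          Submodule.finrank_lt_finrank_of_lt hlt
        have h2 : finrank E ↥(U ⊔ Submodule.span E {w₀}) ≤ finrank E (Fin (2*n) → E) :=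
          Submodule.finrank_le _
        rw [Module.finrank_fin_fun] at h2 ⊢
        omega
      have hdecomp : ∀ w, τ w = w → ∃ c : E, σ c = c ∧ B.toFun v w = c * B.toFun v w₀ := by
        intro w hwfix
        have hwtop : w ∈ U ⊔ Submodule.span E {w₀} := by rw [hsup]; exact Submodule.mem_top
        rcases Submodule.mem_sup.mp hwtop with ⟨u, hu, y, hy, huy⟩
        rcases Submodule.mem_span_singleton.mp hy with ⟨c, rfl⟩
        have huw : u = w - c • w₀ := by rw [← huy]; abel
        have hτu : τ u = w - σ c • w₀ := by
          rw [huw, hτsub, hτsemi, hwfix, hw₀fix]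
        have hτuU : τ u ∈ U := (hUinv u).1 hu
        have hdiff : (c - σ c) • w₀ ∈ U := by
          have hh : (c - σ c) • w₀ = τ u - u := by
            rw [hτu, huw, sub_smul]
            abel
          rw [hh]
          exact Submodule.sub_mem U hτuU hu
        have hcc : σ c = c := by
          by_contra hne
          apply hw₀U
          have h0 : (c - σ c) ≠ 0 := sub_ne_zero.mpr (fun h => hne h.symm)
          have hsm := Submodule.smul_mem U (c - σ c)⁻¹ hdiff
          rwa [smul_smul, inv_mul_cancel₀ h0, one_smul] at hsm
        refine ⟨c, hcc, ?_⟩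
        by_cases hu0 : u = 0
        · have hw' : w = c • w₀ := by rw [← huy, hu0, zero_add]
          rw [hw', B.smul_right, hcc]
        · have hufix : τ u = u := by rw [hτu, hcc, ← huw]
          have hBu : B.toFun v u = 0 := (hkey u hufix hu0).1 hu
          have hexp : B.toFun v w = B.toFun v u + σ c * B.toFun v w₀ := by
            conv_lhs => rw [← huy]
            rw [B.add_right, B.smul_right]
          rw [hexp, hBu, zero_add, hcc]
      have hσz₀ : σ (B.toFun v w₀) ≠ 0 := fun h => hz₀ ((hσz _).1 h)
      refine ⟨σ (B.toFun v w₀) / B.toFun v w₀, div_ne_zero hσz₀ hz₀, ?_⟩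
      intro w hwfix
      rcases hdecomp w hwfix with ⟨c, hcfix, hcz⟩
      rw [hcz, map_mul, hcfix]
      field_simp
    -- global proportionality
    have hi₀ : (0 : ℕ) < 2*n := by omega
    set i₀ : Fin (2*n) := ⟨0, hi₀⟩ with hi₀def
    obtain ⟨lam, hlam0, hlam⟩ := hrowP (b i₀) (b.ne_zero i₀) (hb i₀)
    have hPglob : ∀ v w, τ v = v → τ w = w → σ (B.toFun v w) = lam * B.toFun v w := by
      intro v w hvfix hwfix
      by_cases hv0 : v = 0
      · rw [hv0, hB0l, map_zero, mul_zero]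
      obtain ⟨lamv, hlamv0, hlamv⟩ := hrowP v hv0 hvfix
      have hshared : ∃ w', τ w' = w' ∧ B.toFun v w' ≠ 0 ∧ B.toFun (b i₀) w' ≠ 0 := by
        obtain ⟨i, hi⟩ := hrow0 v hv0
        obtain ⟨j, hj⟩ := hrow0 (b i₀) (b.ne_zero i₀)
        by_cases h1 : B.toFun (b i₀) (b i) ≠ 0
        · exact ⟨b i, hb i, hi, h1⟩
        by_cases h2 : B.toFun v (b j) ≠ 0
        · exact ⟨b j, hb j, h2, hj⟩
        push_neg at h1 h2
        refine ⟨b i + b j, by rw [hτadd, hb, hb], ?_, ?_⟩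
        · rw [B.add_right, h2, add_zero]
          exact hi
        · rw [B.add_right, h1, zero_add]
          exact hj
      obtain ⟨w', hw'fix, hvw', hi₀w'⟩ := hshared
      have hw'0 : w' ≠ 0 := fun h => hvw' (by rw [h, hB0r])
      obtain ⟨lamw, hlamw0, hlamw⟩ := hrowP w' hw'0 hw'fix
      have hrel : ∀ (v' : Fin (2*n) → E), τ v' = v' → ∀ lv : E,
          (∀ w'', τ w'' = w'' → σ (B.toFun v' w'') = lv * B.toFun v' w'') →
          B.toFun v' w' ≠ 0 → lamw * lv = 1 := by
        intro v' hv'fix lv hlv hne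
        have h1 : σ (B.toFun v' w') = lv * B.toFun v' w' := hlv w' hw'fix
        have h2 : σ (B.toFun w' v') = lamw * B.toFun w' v' := hlamw v' hv'fix
        rw [B.conj_symm v' w', hinv, h1] at h2
        have h3 : (lamw * lv) * B.toFun v' w' = 1 * B.toFun v' w' := by
          linear_combination -h2
        exact mul_right_cancel₀ hne h3
      have e1 := hrel v hvfix lamv hlamv hvw'
      have e2 := hrel (b i₀) (hb i₀) lam hlam hi₀w'
      have hlv : lamv = lam := mul_left_cancel₀ hlamw0 (e1.trans e2.symm)
      rw [← hlv]
      exact hlamv w hwfix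
    have hBστ : ∀ x y, σ (B.toFun x y) = lam * B.toFun (τ x) (τ y) := by
      intro x y
      have hgrid : B.toFun x y
          = ∑ i, ∑ j, (b.repr x i) * (σ (b.repr y j) * B.toFun (b i) (b j)) := by
        rw [hBleft x y]
        exact Finset.sum_congr rfl fun i _ => by rw [hBright (b i) y, Finset.mul_sum]
      have hτxy : B.toFun (τ x) (τ y)
          = ∑ i, ∑ j, σ (b.repr x i) * ((b.repr y j) * B.toFun (b i) (b j)) := by
        rw [hBleftτ x (τ y)]
        exact Finset.sum_congr rfl fun i _ => by rw [hBrightτ (b i) y, Finset.mul_sum]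
      calc σ (B.toFun x y)
          = ∑ i, ∑ j, σ (b.repr x i) * ((b.repr y j) * (lam * B.toFun (b i) (b j))) := by
            rw [hgrid, map_sum]
            refine Finset.sum_congr rfl fun i _ => ?_
            rw [map_sum]
            refine Finset.sum_congr rfl fun j _ => ?_
            rw [map_mul, map_mul, hinv, hPglob (b i) (b j) (hb i) (hb j)]
        _ = lam * B.toFun (τ x) (τ y) := by
            rw [hτxy, Finset.mul_sum]
            refine Finset.sum_congr rfl fun i _ => ?_
            rw [Finset.mul_sum]
            refine Finset.sum_congr rfl fun j _ => ?_
            ring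
    intro x
    constructor
    · intro h
      have hh := hBστ x x
      rw [h, map_zero] at hh
      exact ((mul_eq_zero.mp hh.symm).resolve_left hlam0)
    · intro h
      have hh := hBστ x x
      rw [h, mul_zero] at hh
      exact (hσz _).1 hh
  · -- RHS → LHS
    intro hfix
    have hpolar : ∀ v w, τ v = v → τ w = w →
        ∀ c : E, (B.toFun v v + c * σ c * B.toFun w w + σ c * B.toFun v w
            + c * σ (B.toFun v w) = 0 ↔
          B.toFun v v + c * σ c * B.toFun w w + c * B.toFun v w
            + σ c * σ (B.toFun v w) = 0) := by
      intro v w hv hw c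
      have hx : B.toFun (v + c • w) (v + c • w)
          = B.toFun v v + c * σ c * B.toFun w w + σ c * B.toFun v w
            + c * σ (B.toFun v w) := by
        simp only [B.add_left, B.add_right, B.smul_left, B.smul_right]
        rw [B.conj_symm v w]
        ring
      have hτx : τ (v + c • w) = v + σ c • w := by rw [hτadd, hτsemi, hv, hw]
      have hx2 : B.toFun (τ (v + c • w)) (τ (v + c • w))
          = B.toFun v v + c * σ c * B.toFun w w + c * B.toFun v w
            + σ c * σ (B.toFun v w) := by
        rw [hτx]
        simp only [B.add_left, B.add_right, B.smul_left, B.smul_right]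
        rw [B.conj_symm v w, hinv]
        ring
      rw [← hx, ← hx2]
      exact hfix _
    have hrowsign : ∀ v, τ v = v →
        ∃ μ : E, μ ≠ 0 ∧ ∀ w, τ w = w → σ (B.toFun v w) = μ * B.toFun v w := by
      intro v hv
      have hsign : ∀ w, τ w = w →
          σ (B.toFun v w) = B.toFun v w ∨ σ (B.toFun v w) = -B.toFun v w := by
        intro w hw
        have ha : σ (B.toFun v v) = B.toFun v v := (B.conj_symm v v).symm
        have hd : σ (B.toFun w w) = B.toFun w w := (B.conj_symm w w).symm
        exact aux_sign hFE σ hσ hinv ha hd (hpolar v w hv hw)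
      by_cases hall : ∀ w, τ w = w → σ (B.toFun v w) = B.toFun v w
      · exact ⟨1, one_ne_zero, fun w hw => by rw [one_mul]; exact hall w hw⟩
      · push_neg at hall
        obtain ⟨w₂, hw₂, hne₂⟩ := hall
        have hs₂ : σ (B.toFun v w₂) = -B.toFun v w₂ := (hsign w₂ hw₂).resolve_left hne₂
        refine ⟨-1, neg_ne_zero.mpr one_ne_zero, fun w hw => ?_⟩
        rw [neg_one_mul]
        rcases hsign w hw with h | h
        · have hsum := hsign (w + w₂) (by rw [hτadd, hw, hw₂])
          rw [B.add_right, map_add, h, hs₂] at hsum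
          rcases hsum with h2 | h2
          · exfalso
            apply hne₂
            rw [hs₂]
            linear_combination h2
          · rw [h]
            linear_combination h2
        · exact h
    intro v hv0 hvfix
    obtain ⟨μ, hμ0, hμ⟩ := hrowsign v hvfix
    let ℓ : (Fin (2*n) → E) →ₗ[E] E :=
      { toFun := fun x => σ (B.toFun v x)
        map_add' := fun x y => by
          show σ (B.toFun v (x + y)) = σ (B.toFun v x) + σ (B.toFun v y)
          rw [B.add_right, map_add]
        map_smul' := fun c x => by
          show σ (B.toFun v (c • x)) = c * σ (B.toFun v x)
          rw [B.smul_right, map_mul, hinv] }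
    have hℓ : ∀ x, ℓ x = σ (B.toFun v x) := fun x => rfl
    have hker : ∀ x, x ∈ LinearMap.ker ℓ ↔ B.toFun v x = 0 := by
      intro x
      rw [LinearMap.mem_ker, hℓ, hσz]
    have hrange : LinearMap.range ℓ = ⊤ := by
      rcases hrow0 v hv0 with ⟨i, hi⟩
      have hσi : ℓ (b i) ≠ 0 := by
        rw [hℓ]
        exact fun h => hi ((hσz _).1 h)
      refine top_unique fun c _ => ?_
      refine ⟨(c / ℓ (b i)) • b i, ?_⟩
      rw [map_smul, smul_eq_mul, div_mul_cancel₀ _ hσi]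
    have hdim : finrank E ↥(LinearMap.ker ℓ) = 2*n - 1 := by
      have h1 := LinearMap.finrank_range_add_finrank_ker ℓ
      rw [hrange, finrank_top, Module.finrank_self, Module.finrank_fin_fun] at h1
      omega
    have hexpμ : ∀ x, σ (B.toFun v x) = μ * B.toFun v (τ x) := by
      intro x
      rw [hBright v x, hBrightτ v x, map_sum, Finset.mul_sum]
      refine Finset.sum_congr rfl fun i _ => ?_
      rw [map_mul, hinv, hμ (b i) (hb i)]
      ring
    refine ⟨LinearMap.ker ℓ, hdim, ?_, ?_⟩
    · intro x
      rw [hker, hker]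
      constructor
      · intro h
        have hh := hexpμ x
        rw [h, map_zero] at hh
        exact ((mul_eq_zero.mp hh.symm).resolve_left hμ0)
      · intro h
        apply (hσz _).1
        rw [hexpμ x, h, mul_zero]
    · intro p _ _
      constructor
      · intro hle u hu
        exact (hker u).1 (hle hu)
      · intro hall u hu
        exact (hker u).2 (hall u hu)
end

section
/- Let q be a prime power, let H(2n−1,q²) be a non-degenerate Hermitian variety of PG(2n−1,q²), and let Σ be a Baer subgeometry of PG(2n−1,q²). Then Σ is embedded in H(2n−1,q²) (i.e., every point of Σ lies on H(2n−1,q²)) if and only if H(2n−1,q²) induces a symplectic polarity on Σ. -/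
open Module

/-- In a quadratic extension, the fixed field of a nontrivial automorphism is the base. -/
lemma fixed_of_quadratic {F E : Type} [Field F] [Field E] [Algebra F E]
    (hFE : finrank F E = 2) (σ : E ≃ₐ[F] E) (hσ : σ ≠ AlgEquiv.refl)
    {y : E} (hy : σ y = y) : ∃ c : F, algebraMap F E c = y := by
  haveI : FiniteDimensional F E := .of_finrank_eq_succ hFE
  set L : E →ₗ[F] E := σ.toLinearMap - LinearMap.id with hL
  have hLne : L ≠ 0 := by
    intro h
    apply hσ
    ext z
    have := congrArg (fun f => f z) h
    simpa [hL, sub_eq_zero] using this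
  have hrk : finrank F (LinearMap.range L) + finrank F (LinearMap.ker L) = 2 := by
    rw [L.finrank_range_add_finrank_ker, hFE]
  have hrpos : 0 < finrank F (LinearMap.range L) := by
    rcases (Nat.eq_zero_or_pos (finrank F (LinearMap.range L))).symm with h | h
    · exact h
    · exfalso
      apply hLne
      have : LinearMap.range L = ⊥ := by
        apply Submodule.finrank_eq_zero.mp h
      exact LinearMap.range_eq_bot.mp this
  have hker_le : finrank F (LinearMap.ker L) ≤ 1 := by omega
  have hone : (1 : E) ≠ 0 := one_ne_zero
  have hspan : (Submodule.span F {(1 : E)}) ≤ LinearMap.ker L := by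
    rw [Submodule.span_le]
    intro z hz
    simp only [Set.mem_singleton_iff] at hz
    subst hz
    simp [hL, LinearMap.mem_ker]
  have hspan_rk : finrank F (Submodule.span F {(1 : E)}) = 1 :=
    finrank_span_singleton hone
  have heq : Submodule.span F {(1 : E)} = LinearMap.ker L := by
    apply Submodule.eq_of_le_of_finrank_le hspan
    rw [hspan_rk]; exact hker_le
  have hyk : y ∈ LinearMap.ker L := by simp [hL, LinearMap.mem_ker, hy]
  rw [← heq] at hyk
  rcases Submodule.mem_span_singleton.mp hyk with ⟨c, hc⟩
  exact ⟨c, by rw [Algebra.algebraMap_eq_smul_one]; exact hc⟩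

/-- Let `q` be a prime power, `E = GF(q²)` a quadratic extension of
`F = GF(q)` with nontrivial automorphism `σ`, let `H(2n-1,q²)` be the Hermitian variety
given by a nondegenerate Hermitian form `B` on `E^(2n)` relative to `σ`, and let `Σ` be the
Baer subgeometry of `PG(2n-1,q²)` determined by an `F`-form `W`. Then `Σ` is embedded in
`H(2n-1,q²)` (every point of `Σ` lies on the variety) if and only if `H(2n-1,q²)` induces a
symplectic polarity on `Σ`, i.e. there is a nondegenerate alternating `F`-bilinear form `J`
on `W` whose orthogonality relation coincides with the one induced by `B` on `W`. -/
theorem baer_embedded_iff_induces_symplectic_polarity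
    (F E : Type) [Field F] [Field E] [Fintype F] [Fintype E] [Algebra F E]
    (hFE : finrank F E = 2)
    (σ : E ≃ₐ[F] E) (hσ : σ ≠ AlgEquiv.refl) (hinv : ∀ x, σ (σ x) = x)
    (n : ℕ) (hn : 1 ≤ n)
    (B : SesquiForm E (⇑σ) (Fin (2*n) → E)) (hB : B.Nondeg)
    (W : Submodule F (Fin (2*n) → E)) (hW : IsBaerForm E (2*n) W) :
    (∀ v ∈ W, B.toFun v v = 0) ↔
      ∃ J : LinearMap.BilinForm F ↥W, LinearMap.IsAlt J ∧
        LinearMap.BilinForm.Nondegenerate J ∧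
        ∀ v w : ↥W, (B.toFun ↑v ↑w = 0 ↔ J v w = 0) := by
  classical
  constructor
  · intro h
    obtain ⟨x, hx⟩ : ∃ x : E, σ x ≠ x := by
      by_contra hc
      push_neg at hc
      exact hσ (AlgEquiv.ext hc)
    set ε : E := x - σ x with hεdef
    have hε : ε ≠ 0 := sub_ne_zero.mpr (Ne.symm hx)
    have hσε : σ ε = -ε := by
      rw [hεdef, map_sub, hinv x]; ring
    have hzero : ∀ a : Fin (2*n) → E, B.toFun a 0 = 0 := by
      intro a
      have := B.add_right a 0 0
      rw [add_zero] at this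
      exact (add_eq_left.mp this.symm)
    have hskew : ∀ v ∈ W, ∀ w ∈ W, σ (B.toFun v w) = - B.toFun v w := by
      intro v hv w hw
      have h1 := h (v + w) (W.add_mem hv hw)
      rw [B.add_left, B.add_right, B.add_right, h v hv, h w hw] at h1
      have h3 : B.toFun w v = σ (B.toFun v w) := B.conj_symm v w
      rw [h3] at h1
      linear_combination h1
    have hspec : ∀ v w : ↥W, ∃ c : F, B.toFun ↑v ↑w = algebraMap F E c * ε := by
      intro v w
      have hfix : σ (B.toFun ↑v ↑w / ε) = B.toFun ↑v ↑w / ε := by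
        rw [map_div₀, hσε, hskew ↑v v.2 ↑w w.2, neg_div_neg_eq]
      obtain ⟨c, hc⟩ := fixed_of_quadratic hFE σ hσ hfix
      refine ⟨c, ?_⟩
      rw [hc]
      field_simp
    choose j hj using hspec
    have halg : Function.Injective (algebraMap F E) := (algebraMap F E).injective
    have hu : ∀ (v w : ↥W) (c : F), B.toFun ↑v ↑w = algebraMap F E c * ε → j v w = c := by
      intro v w c hc
      apply halg
      have := (hj v w).symm.trans hc
      exact mul_right_cancel₀ hε this
    have hcoeadd : ∀ (v w : ↥W), ((v + w : ↥W) : Fin (2*n) → E) = ↑v + ↑w := fun _ _ => rfl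
    have hcoesmul : ∀ (c : F) (v : ↥W),
        ((c • v : ↥W) : Fin (2*n) → E) = algebraMap F E c • (↑v : Fin (2*n) → E) := by
      intro c v
      rw [Submodule.coe_smul, algebraMap_smul]
    refine ⟨LinearMap.mk₂ F j ?_ ?_ ?_ ?_, ?_, ?_, ?_⟩
    · intro v v' w
      apply hu
      rw [hcoeadd, B.add_left, hj v w, hj v' w, map_add]
      ring
    · intro c v w
      apply hu
      rw [hcoesmul, B.smul_left, hj v w, smul_eq_mul, map_mul]
      ring
    · intro v w w'
      apply hu
      rw [hcoeadd, B.add_right, hj v w, hj v w', map_add]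
      ring
    · intro c v w
      apply hu
      rw [hcoesmul, B.smul_right, σ.commutes, hj v w, smul_eq_mul, map_mul]
      ring
    · intro v
      show j v v = 0
      apply hu
      rw [h ↑v v.2, map_zero, zero_mul]
    · refine (LinearMap.IsRefl.nondegenerate_iff_separatingLeft ?_).mpr ?_
      · intro a b hab
        show j b a = 0
        apply hu
        rw [B.conj_symm a b, hj a b, show j a b = 0 from hab]
        simp
      intro v hv
      have hv' : ∀ w : ↥W, j v w = 0 := hv
      have hBw : ∀ w ∈ W, B.toFun ↑v w = 0 := by
        intro w hw
        have := hj v ⟨w, hw⟩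
        rw [hv' ⟨w, hw⟩, map_zero, zero_mul] at this
        exact this
      have hall : ∀ u : Fin (2*n) → E, B.toFun ↑v u = 0 := by
        intro u
        have hu' : u ∈ Submodule.span E (W : Set (Fin (2*n) → E)) := by
          rw [hW.1]; trivial
        induction hu' using Submodule.span_induction with
        | mem z hz => exact hBw z hz
        | zero => exact hzero _
        | add y z _ _ hy hz => rw [B.add_right, hy, hz, add_zero]
        | smul c y _ hy => rw [B.smul_right, hy, mul_zero]
      exact Subtype.ext (hB ↑v hall)
    · intro v w
      show B.toFun ↑v ↑w = 0 ↔ j v w = 0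
      constructor
      · intro h0
        apply hu
        rw [h0, map_zero, zero_mul]
      · intro h0
        rw [hj v w, h0, map_zero, zero_mul]
  · rintro ⟨J, halt, _, hcompat⟩ v hv
    exact (hcompat ⟨v, hv⟩ ⟨v, hv⟩).mpr (halt ⟨v, hv⟩)
end
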